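/- Let s ∈ (0, 1). If k ∈ ℕ satisfies k ≥ 1/s and γ is a real number with 0 ≤ γ ≤ (1/e)·(s/√(1−s))·√k, then L_k(−γ²) ≥ (2/(5√(s·k)))·cosh(2γ·√((1−s)·k)). -/

import Mathlib

lemma sixteen_pow_le (m : ℕ) (hm : 1 ≤ m) :
    (16 : ℝ) ^ m ≤ 4 * m * (Nat.centralBinom m : ℝ) ^ 2 := by
  induction m with
  | zero => omega
  | succ n ih =>
    rcases Nat.eq_zero_or_pos n with h0 | hpos
    · subst h0
      norm_num [Nat.centralBinom]
    · have ih' := ih hpos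
      have hrec := Nat.succ_mul_centralBinom_succ n
      have hrecR : ((n : ℝ) + 1) * (Nat.centralBinom (n+1) : ℝ)
          = 2 * (2 * n + 1) * (Nat.centralBinom n : ℝ) := by
        exact_mod_cast hrec
      have hn1 : (0:ℝ) < (n:ℝ) + 1 := by positivity
      have hd2 : ((n:ℝ)+1)^2 * (Nat.centralBinom (n+1) : ℝ)^2
          = 4 * (2*n+1)^2 * (Nat.centralBinom n : ℝ)^2 := by
        have := congrArg (fun y => y^2) hrecR
        simp only [mul_pow] at this
        rw [this]; ring
      rw [show (16:ℝ)^(n+1) = 16 * 16^n by ring]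
      have h1 : (16:ℝ) * 16^n ≤ 16 * (4*n*(Nat.centralBinom n : ℝ)^2) := by linarith
      refine h1.trans ?_
      rw [← mul_le_mul_iff_right₀ (show (0:ℝ) < ((n:ℝ)+1)^2 by positivity)]
      have hcb : (0:ℝ) ≤ (Nat.centralBinom n : ℝ)^2 := by positivity
      push_cast
      nlinarith [hd2, hcb, mul_nonneg hn1.le hcb, mul_nonneg (mul_nonneg hn1.le hn1.le) hcb,
        mul_nonneg (Nat.cast_nonneg (α := ℝ) n) hcb]

/-- The Laguerre polynomial `L_k(x) = ∑_{m=0}^k (1/m!) C(k,m) (-x)^m`. -/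
noncomputable def Lag (k : ℕ) (x : ℝ) : ℝ :=
  ∑ m ∈ Finset.range (k + 1), (1 / (m.factorial : ℝ)) * (k.choose m : ℝ) * (-x) ^ m

set_option maxHeartbeats 1000000 in
/-- If `s ∈ (0,1)`, `k ≥ 1/s`, and `0 ≤ γ ≤ (1/e) (s/√(1-s)) √k`, then
`L_k(-γ²) ≥ (2/(5√(sk))) cosh (2 γ √((1-s) k))`. -/
theorem laguerre_lower_bound (s : ℝ) (hs : s ∈ Set.Ioo (0 : ℝ) 1) (k : ℕ)
    (hk : 1 / s ≤ (k : ℝ)) (γ : ℝ) (hγ0 : 0 ≤ γ)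
    (hγ : γ ≤ 1 / Real.exp 1 * (s / Real.sqrt (1 - s)) * Real.sqrt k) :
    2 / (5 * Real.sqrt (s * k)) * Real.cosh (2 * γ * Real.sqrt ((1 - s) * k)) ≤
      Lag k (-γ ^ 2) := by
  obtain ⟨hs0, hs1⟩ := hs
  set u : ℝ := s * k with hu_def
  have hk0 : (0:ℝ) < k := lt_of_lt_of_le (by positivity) hk
  have hu1 : 1 ≤ u := by
    rw [div_le_iff₀ hs0] at hk; linarith [hk]
  have hu0 : 0 < u := by linarith
  have huk : u ≤ k := by nlinarith
  have h1s : (0:ℝ) < 1 - s := by linarith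
  set x : ℝ := 2 * γ * Real.sqrt ((1 - s) * k) with hx_def
  have hx0 : 0 ≤ x := by positivity
  have he7 : (7:ℝ) ≤ Real.exp 1 ^ 2 := by nlinarith [Real.exp_one_gt_d9]
  have hx2eq : x ^ 2 = 4 * γ ^ 2 * ((1 - s) * k) := by
    rw [hx_def, mul_pow, mul_pow, Real.sq_sqrt (by positivity)]; ring
  have hx2 : x ^ 2 ≤ 4 * u ^ 2 / 7 := by
    have he0 : (0:ℝ) < Real.exp 1 := Real.exp_pos 1
    have hB : (1 / Real.exp 1 * (s / Real.sqrt (1 - s)) * Real.sqrt k)^2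
        = 1 / Real.exp 1 ^ 2 * (s^2 / (1-s)) * k := by
      rw [mul_pow, mul_pow, div_pow, div_pow, Real.sq_sqrt h1s.le, Real.sq_sqrt hk0.le, one_pow]
    have hγ2 : γ^2 ≤ 1 / Real.exp 1 ^ 2 * (s^2 / (1-s)) * k := by
      rw [← hB]; exact pow_le_pow_left₀ hγ0 hγ 2
    have key : x ^ 2 ≤ 4 * u^2 / Real.exp 1 ^ 2 := by
      rw [hx2eq, hu_def]
      have h4 : 4 * γ ^ 2 * ((1 - s) * k)
          ≤ 4 * (1 / Real.exp 1 ^ 2 * (s^2 / (1-s)) * k) * ((1 - s) * k) := by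
        apply mul_le_mul_of_nonneg_right _ (by positivity)
        linarith
      refine h4.trans (le_of_eq ?_)
      field_simp
    refine key.trans ?_
    apply div_le_div_of_nonneg_left (by positivity) (by norm_num) he7
  -- floor
  set M : ℕ := ⌊u⌋₊ with hM_def
  have hM1 : 1 ≤ M := Nat.le_floor (by exact_mod_cast hu1)
  have hMle : (M:ℝ) ≤ u := Nat.floor_le hu0.le
  have hltM : u < M + 1 := Nat.lt_floor_add_one u
  have hMk : M ≤ k := by
    have : (M:ℝ) ≤ (k:ℝ) := hMle.trans huk
    exact_mod_cast this
  -- the cosh series terms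
  set t : ℕ → ℝ := fun m => x ^ (2*m) / (2*m).factorial with ht_def
  have ht0 : ∀ m, 0 ≤ t m := fun m => by positivity
  have hcosh : Real.cosh x = ∑' m, t m := Real.cosh_eq_tsum x
  have hsumm : Summable t := (Real.hasSum_cosh x).summable
  have htrec : ∀ m : ℕ, t (m+1) = t m * (x^2 / ((2*m+1) * (2*m+2))) := by
    intro m
    rw [ht_def]
    simp only
    have hfac : ((2*(m+1)).factorial : ℝ) = ((2*m+2) * (2*m+1)) * ((2*m).factorial : ℝ) := by
      rw [show 2*(m+1) = (2*m+1)+1 by ring, Nat.factorial_succ, show (2*m+1) = (2*m)+1 by ring,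
        Nat.factorial_succ]
      push_cast; ring
    have hpow : x ^ (2*(m+1)) = x ^ (2*m) * x^2 := by rw [show 2*(m+1) = 2*m+2 by ring, pow_add]
    rw [hfac, hpow]
    rw [div_mul_div_comm]
    ring
  have hrat : ∀ m : ℕ, u ≤ (m:ℝ) + 1 →
      x^2 / ((2*(m:ℝ)+1) * (2*m+2)) ≤ 2*u / (7*(2*u-1)) := by
    intro m hm
    have h1 : (0:ℝ) < 2*u - 1 := by linarith
    have hden : (2*u-1) * (2*u) ≤ (2*(m:ℝ)+1) * (2*m+2) := by nlinarith
    have hdpos : (0:ℝ) < (2*u-1) * (2*u) := by nlinarith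
    calc x^2 / ((2*(m:ℝ)+1) * (2*m+2)) ≤ (4*u^2/7) / ((2*u-1) * (2*u)) := by
          apply div_le_div₀ (by positivity) hx2 hdpos hden
      _ = 2*u / (7*(2*u-1)) := by field_simp; ring
  have hrat2 : ∀ m : ℕ, u ≤ (m:ℝ) → x^2 / ((2*(m:ℝ)+1) * (2*m+2)) ≤ 1/7 := by
    intro m hm
    have hden : 4*u^2 ≤ (2*(m:ℝ)+1) * (2*m+2) := by nlinarith
    have hdpos : (0:ℝ) < 4*u^2 := by nlinarith
    calc x^2 / ((2*(m:ℝ)+1) * (2*m+2)) ≤ (4*u^2/7) / (4*u^2) := by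
          apply div_le_div₀ (by positivity) hx2 hdpos hden
      _ = 1/7 := by field_simp
  have hgeo : ∀ j : ℕ, t (j + (M+1)) ≤ t (M+1) * (1/7)^j := by
    intro j
    induction j with
    | zero => simp
    | succ n ih =>
      have h1 := htrec (n + (M+1))
      have h2 := hrat2 (n + (M+1)) (by push_cast; linarith)
      have hq : (0:ℝ) ≤ x^2 / ((2*((n + (M+1) : ℕ):ℝ)+1) * (2*((n + (M+1) : ℕ):ℝ)+2)) := by
        positivity
      calc t (n + 1 + (M+1)) = t (n + (M+1) + 1) := by
            rw [show n+1+(M+1) = n+(M+1)+1 from by omega]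
        _ = t (n + (M+1)) * (x^2 / ((2*((n + (M+1) : ℕ):ℝ)+1) * (2*((n + (M+1) : ℕ):ℝ)+2))) := h1
        _ ≤ (t (M+1) * (1/7)^n) * (1/7) :=
            mul_le_mul ih h2 hq (mul_nonneg (ht0 _) (by positivity))
        _ = t (M+1) * (1/7)^(n+1) := by ring
  have htail : ∑' j, t (j + (M+1)) ≤ t (M+1) * (7/6) := by
    have hsum2 : Summable (fun j => t (j + (M+1))) := by
      exact (summable_nat_add_iff (M+1)).mpr hsumm
    have hgsum : Summable (fun j : ℕ => t (M+1) * (1/7)^j) := by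
      apply Summable.mul_left
      exact summable_geometric_of_lt_one (by norm_num) (by norm_num)
    calc ∑' j, t (j + (M+1)) ≤ ∑' j, t (M+1) * (1/7)^j := Summable.tsum_le_tsum hgeo hsum2 hgsum
      _ = t (M+1) * (7/6) := by
          rw [tsum_mul_left, tsum_geometric_of_lt_one (by norm_num) (by norm_num)]
          norm_num
  have hstep : t (M+1) ≤ t M * (2*u / (7*(2*u-1))) := by
    have h1 := htrec M
    have h2 : x^2 / ((2*(M:ℝ)+1) * (2*M+2)) ≤ 2*u / (7*(2*u-1)) := hrat M hltM.le
    rw [h1]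
    exact mul_le_mul_of_nonneg_left h2 (ht0 M)
  set H : ℝ := ∑ m ∈ Finset.range (M+1), t m with hH_def
  have hhead : 1 + t M ≤ H := by
    have ht00 : t 0 = 1 := by simp [ht_def]
    have hsub : ({0, M} : Finset ℕ) ⊆ Finset.range (M+1) := by
      intro i hi
      simp only [Finset.mem_insert, Finset.mem_singleton] at hi
      rcases hi with h | h <;> simp [h] <;> omega
    have hpair : ∑ m ∈ ({0, M} : Finset ℕ), t m = 1 + t M := by
      rw [Finset.sum_pair (by omega)]
      rw [ht00]
    rw [hH_def, ← hpair]
    exact Finset.sum_le_sum_of_subset_of_nonneg hsub (fun i _ _ => ht0 i)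
  have htail2 : ∑' j, t (j + (M+1)) ≤ (1/4) * H := by
    have h2u : (0:ℝ) < 2*u - 1 := by linarith
    have htM : 0 ≤ t M := ht0 M
    have key : ∑' j, t (j + (M+1)) ≤ t M * (u / (3*(2*u-1))) := by
      calc ∑' j, t (j + (M+1)) ≤ t (M+1) * (7/6) := htail
        _ ≤ (t M * (2*u / (7*(2*u-1)))) * (7/6) := by
            apply mul_le_mul_of_nonneg_right hstep (by norm_num)
        _ = t M * (u / (3*(2*u-1))) := by field_simp; ring
    rcases le_or_gt (3/2 : ℝ) u with hcase | hcase
    · have hco : u / (3*(2*u-1)) ≤ 1/4 := by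
        rw [div_le_div_iff₀ (by linarith) (by norm_num)]
        linarith
      calc ∑' j, t (j + (M+1)) ≤ t M * (1/4) := by
            refine key.trans (mul_le_mul_of_nonneg_left hco htM)
        _ ≤ (1/4) * H := by nlinarith
    · have hMeq : M = 1 := by
        rw [hM_def]
        rw [Nat.floor_eq_iff (by linarith)]
        constructor <;> push_cast <;> linarith
      have ht1 : t M ≤ 9/14 := by
        rw [hMeq, ht_def]
        simp only
        norm_num [Nat.factorial]
        nlinarith
      have hco : u / (3*(2*u-1)) ≤ 1/3 := by
        rw [div_le_div_iff₀ (by linarith) (by norm_num)]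
        linarith
      have : ∑' j, t (j + (M+1)) ≤ t M * (1/3) :=
        key.trans (mul_le_mul_of_nonneg_left hco htM)
      nlinarith
  have hcosh2 : Real.cosh x ≤ (5/4) * H := by
    have hsplit := (Summable.sum_add_tsum_nat_add (f := t) (M+1) hsumm)
    rw [hcosh, ← hsplit]
    have : 0 ≤ t M := ht0 M
    linarith [htail2, hhead]
  -- term comparison
  set g : ℕ → ℝ := fun m => 1 / (m.factorial : ℝ) * (k.choose m : ℝ) * (γ^2) ^ m with hg_def
  have hg0 : ∀ m, 0 ≤ g m := fun m => by positivity
  have hsqu : 1 ≤ Real.sqrt u := by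
    rw [show (1:ℝ) = Real.sqrt 1 by simp]; exact Real.sqrt_le_sqrt hu1
  have hsu0 : (0:ℝ) < Real.sqrt u := by linarith
  have hterm : ∀ m ∈ Finset.range (M+1), t m ≤ 2 * Real.sqrt u * g m := by
    have f2 : ∀ m : ℕ, (m:ℝ) ≤ u → ((1-s)*(k:ℝ))^m ≤ (Nat.descFactorial k m : ℝ) := by
      intro m
      induction m with
      | zero => simp
      | succ n ih =>
        intro hn
        push_cast at hn
        have hn' : (n:ℝ) ≤ u := by linarith
        have hnk : n ≤ k := by exact_mod_cast (by linarith : (n:ℝ) ≤ (k:ℝ))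
        rw [Nat.descFactorial_succ]
        push_cast [Nat.cast_sub hnk]
        have hbase : (1-s)*(k:ℝ) ≤ (k:ℝ) - n := by
          have : (1-s)*(k:ℝ) = k - u := by rw [hu_def]; ring
          rw [this]
          linarith
        have h0 : (0:ℝ) ≤ (1-s)*(k:ℝ) := by positivity
        calc ((1-s)*(k:ℝ))^(n+1) = ((1-s)*(k:ℝ)) * ((1-s)*(k:ℝ))^n := by ring
          _ ≤ ((k:ℝ) - n) * (Nat.descFactorial k n : ℝ) :=
              mul_le_mul hbase (ih hn') (by positivity) (by linarith)
    have f1 : ∀ m : ℕ, (m:ℝ) ≤ u → (4:ℝ)^m ≤ 2 * Real.sqrt u * (Nat.centralBinom m : ℝ) := by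
      intro m hm
      rcases Nat.eq_zero_or_pos m with h0 | hm1
      · subst h0
        simp [Nat.centralBinom]
        linarith
      · have h16 := sixteen_pow_le m hm1
        have hcb0 : (0:ℝ) < (Nat.centralBinom m : ℝ) := by
          exact_mod_cast Nat.centralBinom_pos m
        have hsq : ((4:ℝ)^m)^2 ≤ (2 * Real.sqrt u * (Nat.centralBinom m : ℝ))^2 := by
          have h1 : ((4:ℝ)^m)^2 = 16^m := by
            rw [← pow_mul, pow_mul']
            norm_num
          have h2 : (2 * Real.sqrt u * (Nat.centralBinom m : ℝ))^2
              = 4 * u * (Nat.centralBinom m : ℝ)^2 := by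
            rw [mul_pow, mul_pow, Real.sq_sqrt (by linarith)]
            ring
          rw [h1, h2]
          refine h16.trans ?_
          have : 4 * (m:ℝ) ≤ 4 * u := by linarith
          nlinarith [sq_nonneg ((Nat.centralBinom m : ℝ))]
        exact le_of_pow_le_pow_left₀ (by norm_num) (by positivity) hsq
    intro m hm
    have hmM : m ≤ M := by
      simp only [Finset.mem_range] at hm; omega
    have hmu : (m:ℝ) ≤ u := le_trans (by exact_mod_cast hmM) hMle
    have hfac2 : ((2*m).factorial : ℝ) = (Nat.centralBinom m : ℝ) * (m.factorial : ℝ)^2 := by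
      have h := Nat.choose_mul_factorial_mul_factorial (show m ≤ 2*m by omega)
      have h2 : 2*m - m = m := by omega
      rw [h2] at h
      have : (Nat.centralBinom m) * m.factorial * m.factorial = (2*m).factorial := by
        rw [Nat.centralBinom]; exact h
      push_cast [← this]
      ring
    have hdesc : (Nat.descFactorial k m : ℝ) = (m.factorial : ℝ) * (k.choose m : ℝ) := by
      exact_mod_cast Nat.descFactorial_eq_factorial_mul_choose k m
    have hxm : x ^ (2*m) = 4^m * (γ^2)^m * ((1-s)*(k:ℝ))^m := by
      rw [pow_mul, hx2eq]
      rw [← mul_pow, ← mul_pow]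
    have key : (4:ℝ)^m * ((1-s)*(k:ℝ))^m
        ≤ (2 * Real.sqrt u * (Nat.centralBinom m : ℝ)) * (Nat.descFactorial k m : ℝ) :=
      mul_le_mul (f1 m hmu) (f2 m hmu) (by positivity) (by positivity)
    rw [ht_def, hg_def]
    simp only
    rw [hxm, hfac2]
    have hcb0 : (0:ℝ) < (Nat.centralBinom m : ℝ) := by exact_mod_cast Nat.centralBinom_pos m
    have hf0 : (0:ℝ) < (m.factorial : ℝ) := by exact_mod_cast Nat.factorial_pos m
    rw [div_le_iff₀ (by positivity)]
    have hγm : (0:ℝ) ≤ (γ^2)^m := by positivity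
    calc 4^m * (γ^2)^m * ((1-s)*(k:ℝ))^m
        = (γ^2)^m * (4^m * ((1-s)*(k:ℝ))^m) := by ring
      _ ≤ (γ^2)^m * ((2 * Real.sqrt u * (Nat.centralBinom m : ℝ))
            * ((m.factorial:ℝ) * (k.choose m : ℝ))) := by
          rw [← hdesc]
          exact mul_le_mul_of_nonneg_left key hγm
      _ = 2 * Real.sqrt u * (1 / (m.factorial:ℝ) * (k.choose m :ℝ) * (γ^2)^m)
          * ((Nat.centralBinom m : ℝ) * (m.factorial:ℝ)^2) := by
          field_simp
  have hHS : H ≤ 2 * Real.sqrt u * ∑ m ∈ Finset.range (M+1), g m := by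
    calc H ≤ ∑ m ∈ Finset.range (M+1), 2 * Real.sqrt u * g m := Finset.sum_le_sum hterm
      _ = 2 * Real.sqrt u * ∑ m ∈ Finset.range (M+1), g m := by rw [Finset.mul_sum]
  have hSL : ∑ m ∈ Finset.range (M+1), g m ≤ Lag k (-γ^2) := by
    have : Lag k (-γ^2) = ∑ m ∈ Finset.range (k+1), g m := by
      simp only [Lag, hg_def, neg_neg]
    rw [this]
    apply Finset.sum_le_sum_of_subset_of_nonneg
    · exact Finset.range_subset_range.mpr (by omega)
    · intro i _ _; exact hg0 i
  calc 2 / (5 * Real.sqrt u) * Real.cosh x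
      ≤ 2 / (5 * Real.sqrt u) * ((5/4) * (2 * Real.sqrt u * ∑ m ∈ Finset.range (M+1), g m)) := by
        apply mul_le_mul_of_nonneg_left _ (by positivity)
        exact hcosh2.trans (by nlinarith [hHS])
    _ = ∑ m ∈ Finset.range (M+1), g m := by field_simp; ring
    _ ≤ Lag k (-γ^2) := hSL
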